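/- Let 1 < γ ≤ 2 and ρ_0 > 0, and suppose 0 ≤ ρ ≤ ρ_0/2. Then ρ^γ/(γ(γ-1)) - ρ_0^γ/(γ(γ-1)) - (ρ_0^{γ-1}/(γ-1))(ρ - ρ_0) ≥ ((γ - 2 + (1/2)^{γ-1})/(2γ(γ-1)))·ρ_0^γ. -/

import Mathlib

open Real

theorem internal_energy_taylor_lower_bound
    (γ ρ ρ₀ : ℝ)
    (hγ1 : 1 < γ) (hγ2 : γ ≤ 2) (hρ₀ : 0 < ρ₀)
    (hρ : 0 ≤ ρ) (hρ2 : ρ ≤ ρ₀ / 2) :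
    (γ - 2 + (1 / 2 : ℝ) ^ (γ - 1)) / (2 * γ * (γ - 1)) * ρ₀ ^ γ
      ≤ ρ ^ γ / (γ * (γ - 1)) - ρ₀ ^ γ / (γ * (γ - 1))
        - ρ₀ ^ (γ - 1) / (γ - 1) * (ρ - ρ₀) := by
  set b : ℝ := ρ₀ / 2 with hb_def
  have hb : 0 < b := by positivity
  have hγ0 : (0:ℝ) < γ := by linarith
  have hγ1' : (0:ℝ) < γ - 1 := by linarith
  -- Bernoulli: convexity tangent at b
  have hs : -1 ≤ ρ / b - 1 := by
    have : 0 ≤ ρ / b := div_nonneg hρ hb.le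
    linarith
  have hbern := one_add_mul_self_le_rpow_one_add hs hγ1.le
  have h1s : 1 + (ρ / b - 1) = ρ / b := by ring
  rw [h1s, Real.div_rpow hρ hb.le] at hbern
  have hbγpos : 0 < b ^ γ := Real.rpow_pos_of_pos hb γ
  have hb1 : b ^ (γ - 1) * b = b ^ γ := by
    rw [← Real.rpow_add_one hb.ne' (γ - 1)]; ring_nf
  have key : b ^ γ + γ * b ^ (γ - 1) * (ρ - b) ≤ ρ ^ γ := by
    have h := mul_le_mul_of_nonneg_right hbern hbγpos.le
    have hb2 : ρ ^ γ / b ^ γ * b ^ γ = ρ ^ γ := by field_simp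
    rw [hb2] at h
    have hexp : (1 + γ * (ρ / b - 1)) * b ^ γ
        = b ^ γ + γ * b ^ (γ - 1) * (ρ - b) := by
      rw [← hb1]; field_simp
    linarith [hexp ▸ h]
  have hle : b ^ (γ - 1) ≤ ρ₀ ^ (γ - 1) :=
    Real.rpow_le_rpow hb.le (by linarith) hγ1'.le
  have hbγ : b ^ γ = (1/2 : ℝ) ^ γ * ρ₀ ^ γ := by
    rw [hb_def, show ρ₀ / 2 = (1/2 : ℝ) * ρ₀ by ring,
      Real.mul_rpow (by norm_num) hρ₀.le]
  have hhalf : (1/2 : ℝ) ^ γ = (1/2 : ℝ) ^ (γ - 1) * (1/2) := by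
    rw [show ((1:ℝ)/2) ^ (γ - 1) = (1/2 : ℝ) ^ (γ - 1) from rfl,
      ← Real.rpow_add_one (by norm_num : ((1:ℝ)/2) ≠ 0) (γ - 1)]
    ring_nf
  have hρ0γ : ρ₀ ^ γ = ρ₀ ^ (γ - 1) * ρ₀ := by
    rw [← Real.rpow_add_one hρ₀.ne' (γ - 1)]; ring_nf
  set A := ρ ^ γ
  set B := ρ₀ ^ γ
  set C := ρ₀ ^ (γ - 1)
  set E := b ^ (γ - 1)
  set H := (1/2 : ℝ) ^ (γ - 1)
  have hDB : b ^ γ = H * B / 2 := by rw [hbγ, hhalf]; ring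
  rw [hDB, hb_def] at key
  have hγB : γ * B = γ * (C * ρ₀) := by rw [hρ0γ]
  have hprod : 0 ≤ γ * (C - E) * (ρ₀ - 2*ρ) := by
    apply mul_nonneg (mul_nonneg hγ0.le (by linarith)) (by linarith)
  have hnum : 0 ≤ 2*A - 2*B - 2*γ*C*(ρ - ρ₀) - (γ - 2 + H)*B := by
    nlinarith [key, hγB, hprod]
  have heq : A / (γ * (γ - 1)) - B / (γ * (γ - 1)) - C / (γ - 1) * (ρ - ρ₀)
      - (γ - 2 + H) / (2 * γ * (γ - 1)) * B
      = (2*A - 2*B - 2*γ*C*(ρ - ρ₀) - (γ - 2 + H)*B) / (2 * γ * (γ - 1)) := by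
    field_simp
  have hpos := div_nonneg hnum (by positivity : (0:ℝ) ≤ 2 * γ * (γ - 1))
  linarith [heq ▸ hpos]
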